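/- Let 1 ≤ k < n and let S be the set of all permutations in S_n that are a product of two disjoint transpositions (i.e., have support of size 4 and order 2) and whose support intersects both [k] and [n] \ [k]. Then every real eigenvalue of the adjacency matrix of the Cayley graph Γ(S_n, S) is an integer. -/

import Mathlib

open Equiv Matrix Finset

variable {n : ℕ}

/-- Left regular representation permutation matrix. -/
def PM (σ : Equiv.Perm (Fin n)) : Matrix (Equiv.Perm (Fin n)) (Equiv.Perm (Fin n)) ℝ :=
  Matrix.of fun v u => if v = σ * u then 1 else 0

lemma PM_mul (σ τ : Equiv.Perm (Fin n)) : PM σ * PM τ = PM (σ * τ) := by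
  ext v u
  simp only [PM, Matrix.mul_apply, Matrix.of_apply]
  rw [Finset.sum_eq_single (τ * u)]
  · simp [mul_assoc]
  · intro w _ hw
    rw [if_neg hw, mul_zero]
  · simp

lemma PM_one : PM (1 : Equiv.Perm (Fin n)) = 1 := by
  ext v u
  simp [PM, Matrix.one_apply]

lemma PM_transpose (σ : Equiv.Perm (Fin n)) : (PM σ)ᵀ = PM σ⁻¹ := by
  ext v u
  simp only [PM, Matrix.transpose_apply, Matrix.of_apply]
  refine if_congr ?_ rfl rfl
  constructor
  · rintro rfl; simp
  · rintro rfl; simp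

lemma mem_spectrum_iff (M : Matrix (Equiv.Perm (Fin n)) (Equiv.Perm (Fin n)) ℝ) (μ : ℝ) :
    μ ∈ spectrum ℝ M ↔ ∃ v : (Equiv.Perm (Fin n)) → ℝ, v ≠ 0 ∧ M *ᵥ v = μ • v := by
  rw [spectrum.mem_iff]
  have h1 : (algebraMap ℝ (Matrix (Equiv.Perm (Fin n)) (Equiv.Perm (Fin n)) ℝ)) μ - M
      = μ • (1 : Matrix (Equiv.Perm (Fin n)) (Equiv.Perm (Fin n)) ℝ) - M := by
    congr 1
    simp [Algebra.algebraMap_eq_smul_one]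
  rw [h1, Matrix.isUnit_iff_isUnit_det, isUnit_iff_ne_zero, not_not,
    ← Matrix.exists_mulVec_eq_zero_iff]
  constructor
  · rintro ⟨v, hv, h⟩
    refine ⟨v, hv, ?_⟩
    rw [Matrix.sub_mulVec, sub_eq_zero] at h
    rw [← h]
    simp [Matrix.smul_mulVec]
  · rintro ⟨v, hv, h⟩
    refine ⟨v, hv, ?_⟩
    rw [Matrix.sub_mulVec, sub_eq_zero, h]
    simp [Matrix.smul_mulVec]
variable {n : ℕ}

local notation "GP" => Equiv.Perm (Fin n)
local notation "EV" => EuclideanSpace ℝ (Equiv.Perm (Fin n))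

lemma TL_mul (M N : Matrix GP GP ℝ) :
    Matrix.toEuclideanLin (M * N) =
      (Matrix.toEuclideanLin M) ∘ₗ (Matrix.toEuclideanLin N) := by
  apply LinearMap.ext
  intro v
  simp [Matrix.toEuclideanLin_apply, Matrix.mulVec_mulVec]

lemma TL_one : Matrix.toEuclideanLin (1 : Matrix GP GP ℝ) = LinearMap.id := by
  apply LinearMap.ext
  intro v
  simp [Matrix.toEuclideanLin_apply]

lemma spec_of_eigvec (M : Matrix GP GP ℝ) {θ : ℝ} {v : EV} (hv : v ≠ 0)
    (h : Matrix.toEuclideanLin M v = θ • v) : θ ∈ spectrum ℝ M := by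
  rw [mem_spectrum_iff]
  refine ⟨WithLp.equiv 2 _ v, ?_, ?_⟩
  · intro h0
    apply hv
    have := congrArg (WithLp.equiv 2 ((Equiv.Perm (Fin n)) → ℝ)).symm h0
    simpa using this
  · have h2 := congrArg (WithLp.equiv 2 ((Equiv.Perm (Fin n)) → ℝ)) h
    exact h2

lemma eigenspace_ne_bot_of_spec (M : Matrix GP GP ℝ) {μ : ℝ} (h : μ ∈ spectrum ℝ M) :
    Module.End.eigenspace (Matrix.toEuclideanLin M) μ ≠ ⊥ := by
  rw [mem_spectrum_iff] at h
  obtain ⟨v, hv, hMv⟩ := h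
  rw [Submodule.ne_bot_iff]
  refine ⟨(WithLp.equiv 2 _).symm v, ?_, ?_⟩
  · rw [Module.End.mem_eigenspace_iff]
    exact congrArg (WithLp.toLp 2) hMv
  · intro h0
    apply hv
    have := congrArg (WithLp.equiv 2 ((Equiv.Perm (Fin n)) → ℝ)) h0
    simpa using this

lemma TL_isSymmetric {M : Matrix GP GP ℝ} (h : Mᵀ = M) :
    (Matrix.toEuclideanLin M).IsSymmetric := by
  rw [← Matrix.isHermitian_iff_isSymmetric]
  unfold Matrix.IsHermitian
  ext i j
  rw [Matrix.conjTranspose_apply, star_trivial]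
  conv_lhs => rw [← h]
  rfl

lemma eig_invariant {M N : Matrix GP GP ℝ} (hc : Commute N M) {μ : ℝ} {v : EV}
    (hv : v ∈ Module.End.eigenspace (Matrix.toEuclideanLin M) μ) :
    Matrix.toEuclideanLin N v ∈ Module.End.eigenspace (Matrix.toEuclideanLin M) μ := by
  rw [Module.End.mem_eigenspace_iff] at hv ⊢
  have h1 : Matrix.toEuclideanLin M (Matrix.toEuclideanLin N v)
      = Matrix.toEuclideanLin (M * N) v := by rw [TL_mul]; rfl
  rw [h1, ← hc.eq, TL_mul]
  simp only [LinearMap.comp_apply, hv]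
  exact map_smul (Matrix.toEuclideanLin N) μ v

/-- Key lemma: a symmetric matrix has an eigenvector inside any nonzero invariant subspace. -/
lemma exists_eigvec_in (M : Matrix GP GP ℝ) (hM : (Matrix.toEuclideanLin M).IsSymmetric)
    (E : Submodule ℝ EV) (hE : E ≠ ⊥)
    (hinv : ∀ v ∈ E, Matrix.toEuclideanLin M v ∈ E) :
    ∃ θ : ℝ, θ ∈ spectrum ℝ M ∧
      (E ⊓ Module.End.eigenspace (Matrix.toEuclideanLin M) θ) ≠ ⊥ := by
  haveI : Nontrivial E := Submodule.nontrivial_iff_ne_bot.2 hE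
  set T : E →ₗ[ℝ] E := (Matrix.toEuclideanLin M).restrict hinv with hT
  have hTsym : T.IsSymmetric := hM.restrict_invariant hinv
  obtain ⟨θ, hθ⟩ : ∃ θ : ℝ, Module.End.HasEigenvalue T θ :=
    ⟨_, hTsym.hasEigenvalue_iSup_of_finiteDimensional⟩
  obtain ⟨w, hw⟩ := hθ.exists_hasEigenvector
  have hwe : Matrix.toEuclideanLin M (w : EV) = θ • (w : EV) := by
    have h1 : T w = θ • w := Module.End.mem_eigenspace_iff.1 hw.1
    have h2 : ((T w : E) : EV) = Matrix.toEuclideanLin M (w : EV) := rfl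
    rw [← h2, h1]
    rfl
  have hwne : (w : EV) ≠ 0 := by
    intro h0
    exact hw.2 (Subtype.coe_injective (by simpa using h0))
  refine ⟨θ, spec_of_eigvec M hwne hwe, ?_⟩
  rw [Submodule.ne_bot_iff]
  exact ⟨w, ⟨w.2, Module.End.mem_eigenspace_iff.2 hwe⟩, hwne⟩
section Part3
open Equiv Matrix Finset Module

variable {n : ℕ}

-- ### swap identities
lemma swap_I1 {x y z : Fin n} (hxy : x ≠ y) (hxz : x ≠ z) (hyz : y ≠ z) :
    Equiv.swap x y * Equiv.swap x z = Equiv.swap y z * Equiv.swap x y := by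
  ext w
  simp only [Equiv.Perm.mul_apply, Equiv.swap_apply_def]
  split_ifs <;> simp_all

lemma swap_I2 {x y z : Fin n} (hxy : x ≠ y) (hxz : x ≠ z) (hyz : y ≠ z) :
    Equiv.swap x y * Equiv.swap y z = Equiv.swap x z * Equiv.swap x y := by
  ext w
  simp only [Equiv.Perm.mul_apply, Equiv.swap_apply_def]
  split_ifs <;> simp_all

lemma swap_X {x y z : Fin n} (hxy : x ≠ y) (hxz : x ≠ z) (hyz : y ≠ z) :
    Equiv.swap x y * Equiv.swap x z = Equiv.swap x z * Equiv.swap y z := by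
  ext w
  simp only [Equiv.Perm.mul_apply, Equiv.swap_apply_def]
  split_ifs <;> simp_all

lemma swap_Y {x y z : Fin n} (hxy : x ≠ y) (hxz : x ≠ z) (hyz : y ≠ z) :
    Equiv.swap x y * Equiv.swap y z = Equiv.swap y z * Equiv.swap x z := by
  ext w
  simp only [Equiv.Perm.mul_apply, Equiv.swap_apply_def]
  split_ifs <;> simp_all

lemma swap_disjoint {a b c d : Fin n} (h1 : a ≠ c) (h2 : a ≠ d) (h3 : b ≠ c) (h4 : b ≠ d) :
    Equiv.Perm.Disjoint (Equiv.swap a b) (Equiv.swap c d) := by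
  intro x
  by_cases hc : x = c ∨ x = d
  · left
    rcases hc with rfl | rfl
    · exact Equiv.swap_apply_of_ne_of_ne h1.symm h3.symm
    · exact Equiv.swap_apply_of_ne_of_ne h2.symm h4.symm
  · right
    push_neg at hc
    exact Equiv.swap_apply_of_ne_of_ne hc.1 hc.2

lemma swap_comm_of_ne {a b c d : Fin n} (h1 : a ≠ c) (h2 : a ≠ d) (h3 : b ≠ c) (h4 : b ≠ d) :
    Equiv.swap a b * Equiv.swap c d = Equiv.swap c d * Equiv.swap a b :=
  (swap_disjoint h1 h2 h3 h4).commute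

-- ### Jucys–Murphy matrices
def Jm (U : Finset (Fin n)) (i : Fin n) : Matrix (Equiv.Perm (Fin n)) (Equiv.Perm (Fin n)) ℝ :=
  ∑ j ∈ U.filter (· < i), PM (Equiv.swap j i)

lemma jm_transpose (U : Finset (Fin n)) (i : Fin n) : (Jm U i)ᵀ = Jm U i := by
  unfold Jm
  rw [Matrix.transpose_sum]
  refine Finset.sum_congr rfl fun j hj => ?_
  rw [PM_transpose, Equiv.swap_inv]

lemma jm_mul (U : Finset (Fin n)) (i j : Fin n) :
    Jm U i * Jm U j
      = ∑ p ∈ (U.filter (· < i)) ×ˢ (U.filter (· < j)),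
          PM (Equiv.swap p.1 i * Equiv.swap p.2 j) := by
  unfold Jm
  rw [Finset.sum_mul_sum, Finset.sum_product]
  exact Finset.sum_congr rfl fun a _ => Finset.sum_congr rfl fun b _ => PM_mul _ _

lemma jm_commute_aux (U : Finset (Fin n)) {i j : Fin n} (hi : i ∈ U) (hij : i < j) :
    Jm U i * Jm U j = Jm U j * Jm U i := by
  rw [jm_mul, jm_mul]
  refine Finset.sum_nbij'
    (i := fun p => (if p.2 = p.1 then i else if p.2 = i then p.1 else p.2, p.1))
    (j := fun q => (q.2, if q.1 = q.2 then i else if q.1 = i then q.2 else q.1))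
    ?_ ?_ ?_ ?_ ?_
  · rintro ⟨a, b⟩ hp
    simp only [Finset.mem_product, Finset.mem_filter] at hp ⊢
    obtain ⟨⟨haU, hai⟩, hbU, hbj⟩ := hp
    split_ifs with h1 h2
    · exact ⟨⟨hi, hij⟩, haU, hai⟩
    · exact ⟨⟨haU, lt_trans hai hij⟩, haU, hai⟩
    · exact ⟨⟨hbU, hbj⟩, haU, hai⟩
  · rintro ⟨b, a⟩ hq
    simp only [Finset.mem_product, Finset.mem_filter] at hq ⊢
    obtain ⟨⟨hbU, hbj⟩, haU, hai⟩ := hq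
    split_ifs with h1 h2
    · exact ⟨⟨haU, hai⟩, hi, hij⟩
    · exact ⟨⟨haU, hai⟩, haU, lt_trans hai hij⟩
    · exact ⟨⟨haU, hai⟩, hbU, hbj⟩
  · rintro ⟨a, b⟩ hp
    simp only [Finset.mem_product, Finset.mem_filter] at hp
    obtain ⟨⟨haU, hai⟩, hbU, hbj⟩ := hp
    have hane : a ≠ i := ne_of_lt hai
    by_cases h1 : b = a
    · subst h1; simp [hane.symm]
    · by_cases h2 : b = i
      · subst h2; simp [hane, hane.symm]
      · simp [h1, h2]
  · rintro ⟨b, a⟩ hq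
    simp only [Finset.mem_product, Finset.mem_filter] at hq
    obtain ⟨⟨hbU, hbj⟩, haU, hai⟩ := hq
    have hane : a ≠ i := ne_of_lt hai
    by_cases h1 : b = a
    · subst h1; simp [hane]
    · by_cases h2 : b = i
      · subst h2; simp [hane, hane.symm, Ne.symm h1]
      · simp [h1, h2]
  · rintro ⟨a, b⟩ hp
    simp only [Finset.mem_product, Finset.mem_filter] at hp
    obtain ⟨⟨haU, hai⟩, hbU, hbj⟩ := hp
    have hane : a ≠ i := ne_of_lt hai
    have haj : a ≠ j := ne_of_lt (lt_trans hai hij)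
    have hijne : i ≠ j := ne_of_lt hij
    by_cases h1 : b = a
    · subst h1
      simp only [if_pos rfl]
      exact congrArg PM (swap_I1 hane haj hijne)
    · by_cases h2 : b = i
      · subst h2
        simp only [if_neg h1, if_pos rfl]
        exact congrArg PM (swap_I2 hane haj hijne)
      · simp only [if_neg h1, if_neg h2]
        exact congrArg PM (swap_comm_of_ne (Ne.symm h1) haj (Ne.symm h2) hijne)

lemma jm_commute (U : Finset (Fin n)) {i j : Fin n} (hi : i ∈ U) (hj : j ∈ U) :
    Commute (Jm U i) (Jm U j) := by
  rcases lt_trichotomy i j with h | rfl | h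
  · exact jm_commute_aux U hi h
  · rfl
  · exact (jm_commute_aux U hj h).symm

end Part3
section Part4
open Equiv Matrix Finset Module

variable {n : ℕ}

lemma smul_cancel {V : Type*} [AddCommGroup V] [Module ℝ V] {v : V} (hv : v ≠ 0)
    {x y : ℝ} (h : x • v = y • v) : x = y := by
  have h0 : (x - y) • v = 0 := by rw [sub_smul, h, sub_self]
  rcases smul_eq_zero.1 h0 with h1 | h1
  · linarith [sub_eq_zero.1 h1]
  · exact absurd h1 hv

lemma jm_succ (U : Finset (Fin n)) {i' i : Fin n} (hi'U : i' ∈ U) (hlt : i' < i)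
    (hmax : ∀ j ∈ U, j < i → j ≤ i') :
    Jm U i = PM (Equiv.swap i' i) * Jm U i' * PM (Equiv.swap i' i) + PM (Equiv.swap i' i) := by
  have hset : U.filter (· < i) = insert i' (U.filter (· < i')) := by
    ext j
    simp only [Finset.mem_filter, Finset.mem_insert]
    constructor
    · rintro ⟨hjU, hji⟩
      rcases eq_or_ne j i' with rfl | hne
      · exact Or.inl rfl
      · exact Or.inr ⟨hjU, lt_of_le_of_ne (hmax j hjU hji) hne⟩
    · rintro (rfl | ⟨hjU, hji'⟩)
      · exact ⟨hi'U, hlt⟩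
      · exact ⟨hjU, lt_trans hji' hlt⟩
  have hnotmem : i' ∉ U.filter (· < i') := by simp
  unfold Jm
  rw [hset, Finset.sum_insert hnotmem]
  rw [Finset.mul_sum, Finset.sum_mul]
  have hterm : ∀ j ∈ U.filter (· < i'),
      PM (Equiv.swap i' i) * PM (Equiv.swap j i') * PM (Equiv.swap i' i)
        = PM (Equiv.swap j i) := by
    intro j hj
    simp only [Finset.mem_filter] at hj
    have hji' : j ≠ i' := ne_of_lt hj.2
    have hji : j ≠ i := ne_of_lt (lt_trans hj.2 hlt)
    rw [PM_mul, PM_mul]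
    congr 1
    have h1 : Equiv.swap ((Equiv.swap i' i) j) ((Equiv.swap i' i) i')
        = Equiv.swap i' i * Equiv.swap j i' * (Equiv.swap i' i)⁻¹ :=
      Equiv.swap_apply_apply _ _ _
    rw [Equiv.swap_apply_of_ne_of_ne hji' hji, Equiv.swap_apply_left, Equiv.swap_inv] at h1
    rw [← h1]
  rw [Finset.sum_congr rfl hterm]
  rw [add_comm]

lemma jm_spec_aux : ∀ (c : ℕ) (U : Finset (Fin n)) (i : Fin n), i ∈ U →
    (U.filter (· < i)).card = c → ∀ μ ∈ spectrum ℝ (Jm U i), ∃ m : ℤ, μ = (m : ℝ) := by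
  intro c
  induction c using Nat.strong_induction_on with
  | _ c IH =>
    intro U i hi hc μ hμ
    rcases Nat.eq_zero_or_pos c with rfl | hpos
    · -- base case : Jm U i = 0
      have hempty : U.filter (· < i) = ∅ := Finset.card_eq_zero.1 hc
      have hJ : Jm U i = 0 := by unfold Jm; rw [hempty, Finset.sum_empty]
      rw [hJ, mem_spectrum_iff] at hμ
      obtain ⟨v, hv, hMv⟩ := hμ
      rw [Matrix.zero_mulVec] at hMv
      rcases smul_eq_zero.1 hMv.symm with h | h
      · exact ⟨0, by simp [h]⟩
      · exact absurd h hv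
    · -- inductive step
      have hne : (U.filter (· < i)).Nonempty := Finset.card_pos.1 (hc ▸ hpos)
      set i' : Fin n := (U.filter (· < i)).max' hne with hi'def
      have hi'mem : i' ∈ U.filter (· < i) := Finset.max'_mem _ hne
      have hi'U : i' ∈ U := (Finset.mem_filter.1 hi'mem).1
      have hi'lt : i' < i := (Finset.mem_filter.1 hi'mem).2
      have hmax : ∀ j ∈ U, j < i → j ≤ i' := by
        intro j hjU hji
        exact Finset.le_max' (U.filter (· < i)) j (Finset.mem_filter.2 ⟨hjU, hji⟩)
      have hcard' : (U.filter (· < i')).card < c := by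
        have hsub : U.filter (· < i') = (U.filter (· < i)).erase i' := by
          ext j
          simp only [Finset.mem_filter, Finset.mem_erase]
          constructor
          · rintro ⟨hjU, hji'⟩
            exact ⟨ne_of_lt hji', hjU, lt_trans hji' hi'lt⟩
          · rintro ⟨hne', hjU, hji⟩
            exact ⟨hjU, lt_of_le_of_ne (hmax j hjU hji) hne'⟩
        rw [hsub, Finset.card_erase_of_mem hi'mem, hc]
        omega
      set S := PM (Equiv.swap i' i) with hSdef
      set K := Jm U i' with hKdef
      set J := Jm U i with hJdef
      have hrel : J = S * K * S + S := jm_succ U hi'U hi'lt hmax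
      have hSS : S * S = 1 := by
        rw [hSdef, PM_mul, Equiv.swap_mul_self, PM_one]
      have hSJ : S * J = K * S + 1 := by
        rw [hrel]
        have h1 : S * (S * K * S + S) = S * S * (K * S) + S * S := by noncomm_ring
        rw [h1, hSS, one_mul]
      have hKS : K * S = S * J - 1 := by rw [hSJ, add_sub_cancel_right]
      have hcomm : Commute J K := jm_commute U hi hi'U
      have hKsym : (Matrix.toEuclideanLin K).IsSymmetric := TL_isSymmetric (jm_transpose U i')
      set E := Module.End.eigenspace (Matrix.toEuclideanLin J) μ with hEdef
      have hE : E ≠ ⊥ := eigenspace_ne_bot_of_spec J hμ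
      have hinv : ∀ v ∈ E, Matrix.toEuclideanLin K v ∈ E := fun v hv =>
        eig_invariant hcomm.symm hv
      obtain ⟨a, haspec, hEa⟩ := exists_eigvec_in K hKsym E hE hinv
      obtain ⟨v, hvmem, hvne⟩ := (Submodule.ne_bot_iff _).1 hEa
      obtain ⟨hvE, hvKa⟩ := Submodule.mem_inf.1 hvmem
      have hvJ : Matrix.toEuclideanLin J v = μ • v := Module.End.mem_eigenspace_iff.1 hvE
      have hvK : Matrix.toEuclideanLin K v = a • v := Module.End.mem_eigenspace_iff.1 hvKa
      obtain ⟨ma, hma⟩ := IH _ hcard' U i' hi'U rfl a haspec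
      set w := Matrix.toEuclideanLin S v with hwdef
      have e2 : Matrix.toEuclideanLin S w = v := by
        rw [hwdef, ← LinearMap.comp_apply, ← TL_mul, hSS, TL_one, LinearMap.id_apply]
      have e3 : Matrix.toEuclideanLin K w = μ • w - v := by
        have h5 : Matrix.toEuclideanLin (K * S) v = Matrix.toEuclideanLin (S * J - 1) v := by
          rw [hKS]
        rw [map_sub, TL_mul, TL_mul, TL_one] at h5
        simp only [LinearMap.comp_apply, LinearMap.sub_apply, LinearMap.id_apply, hvJ,
          _root_.map_smul] at h5
        rw [hwdef]
        exact h5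
      have e4 : Matrix.toEuclideanLin S (μ • v) = Matrix.toEuclideanLin K w + v := by
        have h5 : Matrix.toEuclideanLin (S * J) v = Matrix.toEuclideanLin (K * S + 1) v := by
          rw [hSJ]
        rw [map_add, TL_mul, TL_mul, TL_one] at h5
        simp only [LinearMap.comp_apply, LinearMap.add_apply, LinearMap.id_apply, hvJ] at h5
        rw [hwdef]
        exact h5
      by_cases hdep : ∃ cc : ℝ, w = cc • v
      · obtain ⟨cc, hcc⟩ := hdep
        have hc2 : cc * cc = 1 := by
          have h2' := e2
          rw [hcc, _root_.map_smul, ← hwdef, hcc, smul_smul] at h2'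
          have h0 : (cc * cc) • v = (1 : ℝ) • v := by rw [h2', one_smul]
          exact smul_cancel hvne h0
        have hKw : Matrix.toEuclideanLin K w = (cc * a) • v := by
          rw [hcc, _root_.map_smul, hvK, smul_smul]
        have h7 : (cc * a) • v = (μ * cc - 1) • v := by
          rw [← hKw, e3, hcc, smul_smul, sub_smul, one_smul]
        have hμc : cc * a = μ * cc - 1 := smul_cancel hvne h7
        have hμc' : μ * cc = cc * a + 1 := by linarith
        have hμeq : μ = a + cc := by
          calc μ = μ * (cc * cc) := by rw [hc2, mul_one]
          _ = (μ * cc) * cc := by ring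
          _ = (cc * a + 1) * cc := by rw [hμc']
          _ = a * (cc * cc) + cc := by ring
          _ = a + cc := by rw [hc2]; ring
        rcases mul_self_eq_one_iff.1 hc2 with h1 | h1
        · exact ⟨ma + 1, by rw [hμeq, hma, h1]; push_cast; ring⟩
        · exact ⟨ma - 1, by rw [hμeq, hma, h1]; push_cast; ring⟩
      · by_cases hμa : μ = a
        · exact ⟨ma, hμa ▸ hma⟩
        · have hane : a - μ ≠ 0 := sub_ne_zero.2 (Ne.symm hμa)
          set x : ℝ := (a - μ)⁻¹ with hxdef
          set u : EuclideanSpace ℝ (Equiv.Perm (Fin n)) := w + x • v with hudef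
          have hx : x * a - 1 = μ * x := by
            have h8 : x * (a - μ) = 1 := inv_mul_cancel₀ hane
            nlinarith [h8]
          have hKu : Matrix.toEuclideanLin K u = μ • u := by
            rw [hudef, map_add, e3, _root_.map_smul, hvK]
            have h9 : μ • w - v + x • (a • v) = μ • w + (x * a - 1) • v := by
              rw [smul_smul, sub_smul, one_smul]
              abel
            rw [h9, hx]
            rw [smul_add, smul_smul]
          have hune : u ≠ 0 := by
            intro h0
            apply hdep
            refine ⟨-x, ?_⟩
            have : w = -(x • v) := by
              rw [eq_neg_iff_add_eq_zero]
              exact hudef ▸ h0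
            rw [this, neg_smul]
          have hμK : μ ∈ spectrum ℝ K := spec_of_eigvec K hune hKu
          exact IH _ hcard' U i' hi'U rfl μ hμK

end Part4
section Part5
open Equiv Matrix Finset Module

variable {n : ℕ}

open scoped Classical in
noncomputable def DD (U : Finset (Fin n)) : Finset (Equiv.Perm (Fin n)) :=
  Finset.univ.filter (fun σ => orderOf σ = 2 ∧ σ.support.card = 4 ∧ σ.support ⊆ U)

open scoped Classical in
lemma mem_DD {U : Finset (Fin n)} {σ : Equiv.Perm (Fin n)} :
    σ ∈ DD U ↔ orderOf σ = 2 ∧ σ.support.card = 4 ∧ σ.support ⊆ U := by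
  unfold DD
  simp

noncomputable def ZU (U : Finset (Fin n)) : Matrix (Equiv.Perm (Fin n)) (Equiv.Perm (Fin n)) ℝ :=
  ∑ σ ∈ DD U, PM σ

lemma quad_facts {a i b j : Fin n} (hai : a < i) (hbj : b < j) (hij : i < j)
    (hba : b ≠ a) (hbi : b ≠ i) :
    (Equiv.swap a i * Equiv.swap b j).support = insert a (insert i (insert b {j})) ∧
    orderOf (Equiv.swap a i * Equiv.swap b j) = 2 ∧
    (Equiv.swap a i * Equiv.swap b j).support.card = 4 ∧
    (Equiv.swap a i * Equiv.swap b j) j = b ∧ (Equiv.swap a i * Equiv.swap b j) i = a := by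
  have hani : a ≠ i := ne_of_lt hai
  have hanj : a ≠ j := ne_of_lt (lt_trans hai hij)
  have hinj : i ≠ j := ne_of_lt hij
  have hbnj : b ≠ j := ne_of_lt hbj
  have hdisj : Equiv.Perm.Disjoint (Equiv.swap a i) (Equiv.swap b j) :=
    swap_disjoint (Ne.symm hba) hanj (Ne.symm hbi) hinj
  have hsupp : (Equiv.swap a i * Equiv.swap b j).support = insert a (insert i (insert b {j})) := by
    rw [hdisj.support_mul, Equiv.Perm.support_swap hani, Equiv.Perm.support_swap hbnj]
    ext x
    simp only [Finset.mem_union, Finset.mem_insert, Finset.mem_singleton]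
    tauto
  have hcard : (Equiv.swap a i * Equiv.swap b j).support.card = 4 := by
    rw [hsupp]
    rw [Finset.card_insert_of_notMem (by simp [hani, Ne.symm hba, hanj]),
      Finset.card_insert_of_notMem (by simp [Ne.symm hbi, hinj]),
      Finset.card_insert_of_notMem (by simp [hbnj]), Finset.card_singleton]
  have hsq : (Equiv.swap a i * Equiv.swap b j) * (Equiv.swap a i * Equiv.swap b j) = 1 := by
    have hc := hdisj.commute
    calc (Equiv.swap a i * Equiv.swap b j) * (Equiv.swap a i * Equiv.swap b j)
        = Equiv.swap a i * (Equiv.swap b j * Equiv.swap a i) * Equiv.swap b j := by group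
    _ = Equiv.swap a i * (Equiv.swap a i * Equiv.swap b j) * Equiv.swap b j := by rw [hc.eq]
    _ = (Equiv.swap a i * Equiv.swap a i) * (Equiv.swap b j * Equiv.swap b j) := by group
    _ = 1 := by rw [Equiv.swap_mul_self, Equiv.swap_mul_self, one_mul]
  have hne1 : (Equiv.swap a i * Equiv.swap b j) ≠ 1 := by
    intro h
    rw [h] at hcard
    simp [Equiv.Perm.support_one] at hcard
  have horder : orderOf (Equiv.swap a i * Equiv.swap b j) = 2 := by
    haveI : Fact (Nat.Prime 2) := ⟨Nat.prime_two⟩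
    exact orderOf_eq_prime (by rw [pow_two]; exact hsq) hne1
  have happj : (Equiv.swap a i * Equiv.swap b j) j = b := by
    rw [Equiv.Perm.mul_apply, Equiv.swap_apply_right,
      Equiv.swap_apply_of_ne_of_ne hba hbi]
  have happi : (Equiv.swap a i * Equiv.swap b j) i = a := by
    rw [Equiv.Perm.mul_apply, Equiv.swap_apply_of_ne_of_ne (Ne.symm hbi) hinj,
      Equiv.swap_apply_right]
  exact ⟨hsupp, horder, hcard, happj, happi⟩

lemma sumJJ (U : Finset (Fin n)) :
    ∑ p ∈ (U ×ˢ U).filter (fun p => p.1 < p.2), Jm U p.1 * Jm U p.2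
      = ∑ q ∈ ((U ×ˢ U) ×ˢ (U ×ˢ U)).filter
          (fun q => q.1.1 < q.1.2 ∧ q.2.1 < q.1.1 ∧ q.2.2 < q.1.2),
          PM (Equiv.swap q.2.1 q.1.1 * Equiv.swap q.2.2 q.1.2) := by
  conv_lhs => rw [Finset.sum_filter]
  conv_rhs => rw [Finset.sum_filter, Finset.sum_product]
  refine Finset.sum_congr rfl fun p hp => ?_
  by_cases hlt : p.1 < p.2
  · rw [if_pos hlt, jm_mul, ← Finset.filter_product, ← Finset.sum_filter]
    exact Finset.sum_congr (by simp [hlt]) fun q _ => rfl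
  · rw [if_neg hlt]
    refine (Finset.sum_eq_zero fun r hr => ?_).symm
    simp [hlt]

lemma sumJsq (U : Finset (Fin n)) :
    ∑ i ∈ U, Jm U i * Jm U i
      = ∑ q ∈ (U ×ˢ (U ×ˢ U)).filter (fun q => q.2.1 < q.1 ∧ q.2.2 < q.1),
          PM (Equiv.swap q.2.1 q.1 * Equiv.swap q.2.2 q.1) := by
  conv_rhs => rw [Finset.sum_filter, Finset.sum_product]
  refine Finset.sum_congr rfl fun i hi => ?_
  rw [jm_mul, ← Finset.filter_product, ← Finset.sum_filter]

end Part5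
section Part6
open Equiv Matrix Finset Module

variable {n : ℕ}

lemma quad_max {a i b j : Fin n} (hai : a < i) (hbj : b < j) (hij : i < j)
    (hba : b ≠ a) (hbi : b ≠ i) :
    ∀ x ∈ (Equiv.swap a i * Equiv.swap b j).support, x ≤ j := by
  obtain ⟨hsupp, -, -, -, -⟩ := quad_facts hai hbj hij hba hbi
  intro x hx
  rw [hsupp] at hx
  simp only [Finset.mem_insert, Finset.mem_singleton] at hx
  rcases hx with rfl | rfl | rfl | rfl
  · exact le_of_lt (lt_trans hai hij)
  · exact le_of_lt hij
  · exact le_of_lt hbj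
  · exact le_refl _

lemma sumQd (U : Finset (Fin n)) :
    ∑ q ∈ (((U ×ˢ U) ×ˢ (U ×ˢ U)).filter
        (fun q => q.1.1 < q.1.2 ∧ q.2.1 < q.1.1 ∧ q.2.2 < q.1.2)).filter
        (fun q => q.2.2 ≠ q.2.1 ∧ q.2.2 ≠ q.1.1),
      PM (Equiv.swap q.2.1 q.1.1 * Equiv.swap q.2.2 q.1.2) = ZU U := by
  unfold ZU
  refine Finset.sum_bij
    (fun q _ => Equiv.swap q.2.1 q.1.1 * Equiv.swap q.2.2 q.1.2) ?_ ?_ ?_ ?_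
  · -- maps into DD U
    rintro ⟨⟨i, j⟩, a, b⟩ hq
    simp only [Finset.mem_filter, Finset.mem_product] at hq
    obtain ⟨⟨⟨⟨hiU, hjU⟩, haU, hbU⟩, hij, hai, hbj⟩, hba, hbi⟩ := hq
    obtain ⟨hsupp, horder, hcard, -, -⟩ := quad_facts hai hbj hij hba hbi
    rw [mem_DD]
    refine ⟨horder, hcard, ?_⟩
    rw [hsupp]
    intro x hx
    simp only [Finset.mem_insert, Finset.mem_singleton] at hx
    rcases hx with rfl | rfl | rfl | rfl <;> assumption
  · -- injective
    rintro ⟨⟨i, j⟩, a, b⟩ h1 ⟨⟨i', j'⟩, a', b'⟩ h2 heq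
    simp only [Finset.mem_filter, Finset.mem_product] at h1 h2
    obtain ⟨⟨-, hij, hai, hbj⟩, hba, hbi⟩ := h1
    obtain ⟨⟨-, hij', hai', hbj'⟩, hba', hbi'⟩ := h2
    simp only at heq
    obtain ⟨hsupp, -, -, happj, -⟩ := quad_facts hai hbj hij hba hbi
    obtain ⟨hsupp', -, -, happj', -⟩ := quad_facts hai' hbj' hij' hba' hbi'
    have hmax := quad_max hai hbj hij hba hbi
    have hmax' := quad_max hai' hbj' hij' hba' hbi'
    have hjj : j = j' := by
      apply le_antisymm
      · apply hmax' j
        rw [← heq, hsupp]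
        simp
      · apply hmax j'
        rw [heq, hsupp']
        simp
    subst hjj
    have hbb : b = b' := by
      rw [← happj, heq, happj']
    subst hbb
    have hswap : Equiv.swap a i = Equiv.swap a' i' := mul_right_cancel heq
    have hani : a ≠ i := ne_of_lt hai
    have hani' : a' ≠ i' := ne_of_lt hai'
    have hsets : ({a, i} : Finset (Fin n)) = {a', i'} := by
      rw [← Equiv.Perm.support_swap hani, ← Equiv.Perm.support_swap hani', hswap]
    have ha' : a' ∈ ({a, i} : Finset (Fin n)) := by rw [hsets]; simp
    have hi' : i' ∈ ({a, i} : Finset (Fin n)) := by rw [hsets]; simp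
    simp only [Finset.mem_insert, Finset.mem_singleton] at ha' hi'
    rcases ha' with rfl | rfl
    · rcases hi' with h | rfl
      · exact absurd h.symm hani'
      · rfl
    · rcases hi' with rfl | h
      · exact absurd hai' (not_lt.2 (le_of_lt hai))
      · exact absurd (h ▸ hai' : a' < a') (lt_irrefl _)
  · -- surjective
    intro σ hσ
    rw [mem_DD] at hσ
    obtain ⟨h2, h4, hsub⟩ := hσ
    have hσ2 : σ * σ = 1 := by
      have h := pow_orderOf_eq_one σ
      rwa [h2, pow_two] at h
    have happ : ∀ x, σ (σ x) = x := by
      intro x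
      rw [← Equiv.Perm.mul_apply, hσ2, Equiv.Perm.one_apply]
    have hne : σ.support.Nonempty := Finset.card_pos.1 (by rw [h4]; norm_num)
    set j := σ.support.max' hne with hjdef
    have hjmem : j ∈ σ.support := Finset.max'_mem _ _
    set b := σ j with hbdef
    have hbmem : b ∈ σ.support := Equiv.Perm.apply_mem_support.2 hjmem
    have hbj_ne : b ≠ j := Equiv.Perm.mem_support.1 hjmem
    have hblt : b < j := lt_of_le_of_ne (Finset.le_max' _ _ hbmem) hbj_ne
    have hbmem' : b ∈ σ.support.erase j := Finset.mem_erase.2 ⟨hbj_ne, hbmem⟩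
    set rest := (σ.support.erase j).erase b with hrdef
    have hrcard : rest.card = 2 := by
      rw [hrdef, Finset.card_erase_of_mem hbmem', Finset.card_erase_of_mem hjmem, h4]
    have hrne : rest.Nonempty := Finset.card_pos.1 (by rw [hrcard]; norm_num)
    set i := rest.max' hrne with hidef
    have himem : i ∈ rest := Finset.max'_mem _ _
    have hi_ne_b : i ≠ b := (Finset.mem_erase.1 himem).1
    have himem2 : i ∈ σ.support.erase j := (Finset.mem_erase.1 himem).2
    have hi_ne_j : i ≠ j := (Finset.mem_erase.1 himem2).1
    have hi_sup : i ∈ σ.support := (Finset.mem_erase.1 himem2).2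
    have hij : i < j := lt_of_le_of_ne (Finset.le_max' _ _ hi_sup) hi_ne_j
    set a := σ i with hadef
    have ha_sup : a ∈ σ.support := Equiv.Perm.apply_mem_support.2 hi_sup
    have ha_ne_i : a ≠ i := Equiv.Perm.mem_support.1 hi_sup
    have ha_ne_b : a ≠ b := by
      intro h
      apply hi_ne_j
      have h' := congrArg σ h
      rwa [hadef, hbdef, happ, happ] at h'
    have ha_ne_j : a ≠ j := by
      intro h
      apply hi_ne_b
      have h' := congrArg σ h
      rw [hadef, happ] at h'
      rw [h', hbdef]
    have ha_rest : a ∈ rest :=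
      Finset.mem_erase.2 ⟨ha_ne_b, Finset.mem_erase.2 ⟨ha_ne_j, ha_sup⟩⟩
    have hai : a < i := lt_of_le_of_ne (Finset.le_max' _ _ ha_rest) ha_ne_i
    set T : Finset (Fin n) := insert a (insert i (insert b {j})) with hTdef
    have hT_sub : T ⊆ σ.support := by
      rw [hTdef]
      intro x hx
      simp only [Finset.mem_insert, Finset.mem_singleton] at hx
      rcases hx with rfl | rfl | rfl | rfl <;> assumption
    have hTcard : T.card = 4 := by
      rw [hTdef]
      rw [Finset.card_insert_of_notMem (by simp [ha_ne_i, ha_ne_b, ha_ne_j]),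
        Finset.card_insert_of_notMem (by simp [hi_ne_b, hi_ne_j]),
        Finset.card_insert_of_notMem (by simp [hbj_ne]), Finset.card_singleton]
    have hTeq : T = σ.support := Finset.eq_of_subset_of_card_le hT_sub (by rw [h4, hTcard])
    have hσeq : σ = Equiv.swap a i * Equiv.swap b j := by
      ext x
      by_cases hx : x ∈ T
      · rw [hTdef] at hx
        simp only [Finset.mem_insert, Finset.mem_singleton] at hx
        rcases hx with rfl | rfl | rfl | rfl
        · rw [Equiv.Perm.mul_apply,
            Equiv.swap_apply_of_ne_of_ne ha_ne_b ha_ne_j, Equiv.swap_apply_left]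
          rw [hadef, happ]
        · rw [Equiv.Perm.mul_apply,
            Equiv.swap_apply_of_ne_of_ne hi_ne_b hi_ne_j,
            Equiv.swap_apply_right, hadef]
        · rw [Equiv.Perm.mul_apply, Equiv.swap_apply_left,
            Equiv.swap_apply_of_ne_of_ne (Ne.symm ha_ne_j) (Ne.symm hi_ne_j)]
          rw [hbdef, happ]
        · rw [Equiv.Perm.mul_apply, Equiv.swap_apply_right,
            Equiv.swap_apply_of_ne_of_ne (Ne.symm ha_ne_b) (Ne.symm hi_ne_b), hbdef]
      · have hxsup : x ∉ σ.support := fun h => hx (hTeq ▸ h)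
        rw [hTdef] at hx
        simp only [Finset.mem_insert, Finset.mem_singleton, not_or] at hx
        obtain ⟨hxa, hxi, hxb, hxj⟩ := hx
        rw [Equiv.Perm.notMem_support.1 hxsup, Equiv.Perm.mul_apply,
          Equiv.swap_apply_of_ne_of_ne hxb hxj, Equiv.swap_apply_of_ne_of_ne hxa hxi]
    refine ⟨((i, j), (a, b)), ?_, hσeq.symm⟩
    simp only [Finset.mem_filter, Finset.mem_product]
    exact ⟨⟨⟨⟨hsub hi_sup, hsub hjmem⟩, hsub ha_sup, hsub hbmem⟩, hij, hai, hblt⟩,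
      Ne.symm ha_ne_b, Ne.symm hi_ne_b⟩
  · intro q hq
    rfl

end Part6
section Part7
open Equiv Matrix Finset Module

variable {n : ℕ}

lemma sumQo (U : Finset (Fin n)) :
    ∑ q ∈ (((U ×ˢ U) ×ˢ (U ×ˢ U)).filter
        (fun q => q.1.1 < q.1.2 ∧ q.2.1 < q.1.1 ∧ q.2.2 < q.1.2)).filter
        (fun q => ¬(q.2.2 ≠ q.2.1 ∧ q.2.2 ≠ q.1.1)),
      PM (Equiv.swap q.2.1 q.1.1 * Equiv.swap q.2.2 q.1.2)
    = ∑ q ∈ ((U ×ˢ (U ×ˢ U)).filter (fun q => q.2.1 < q.1 ∧ q.2.2 < q.1)).filter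
        (fun q => ¬(q.2.1 = q.2.2)),
      PM (Equiv.swap q.2.1 q.1 * Equiv.swap q.2.2 q.1) := by
  refine Finset.sum_nbij'
    (i := fun q => if q.2.2 = q.2.1 then (q.1.2, (q.2.1, q.1.1)) else (q.1.2, (q.1.1, q.2.1)))
    (j := fun r => if r.2.1 < r.2.2 then ((r.2.2, r.1), (r.2.1, r.2.1))
                   else ((r.2.1, r.1), (r.2.2, r.2.1)))
    ?_ ?_ ?_ ?_ ?_
  · rintro ⟨⟨i, j⟩, a, b⟩ hq
    simp only [Finset.mem_filter, Finset.mem_product, not_and, not_ne_iff] at hq ⊢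
    obtain ⟨⟨⟨⟨hiU, hjU⟩, haU, hbU⟩, hij, hai, hbj⟩, hcase⟩ := hq
    by_cases hba : b = a
    · rw [if_pos hba]
      exact ⟨⟨⟨hjU, haU, hiU⟩, lt_trans hai hij, hij⟩, fun h => absurd h (ne_of_lt hai)⟩
    · rw [if_neg hba]
      have hbi : b = i := hcase hba
      exact ⟨⟨⟨hjU, hiU, haU⟩, hij, lt_trans hai hij⟩, fun h => absurd h.symm (ne_of_lt hai)⟩
  · rintro ⟨i0, a0, b0⟩ hr
    simp only [Finset.mem_filter, Finset.mem_product, not_and, not_ne_iff] at hr ⊢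
    obtain ⟨⟨⟨hi0U, ha0U, hb0U⟩, ha0, hb0⟩, hne⟩ := hr
    by_cases hlt : a0 < b0
    · rw [if_pos hlt]
      exact ⟨⟨⟨⟨hb0U, hi0U⟩, ha0U, ha0U⟩, hb0, hlt, ha0⟩, fun h => absurd rfl h⟩
    · rw [if_neg hlt]
      have hb0a0 : b0 < a0 := lt_of_le_of_ne (not_lt.1 hlt) (fun h => hne h.symm)
      exact ⟨⟨⟨⟨ha0U, hi0U⟩, hb0U, ha0U⟩, ha0, hb0a0, ha0⟩, fun _ => rfl⟩
  · rintro ⟨⟨i, j⟩, a, b⟩ hq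
    simp only [Finset.mem_filter, Finset.mem_product, not_and, not_ne_iff] at hq
    obtain ⟨⟨⟨⟨hiU, hjU⟩, haU, hbU⟩, hij, hai, hbj⟩, hcase⟩ := hq
    dsimp only
    by_cases hba : b = a
    · rw [if_pos hba]
      dsimp only
      rw [if_pos hai]
      simp [hba]
    · have hbi : b = i := hcase hba
      rw [if_neg hba]
      dsimp only
      rw [if_neg (not_lt.2 (le_of_lt hai))]
      simp [hbi]
  · rintro ⟨i0, a0, b0⟩ hr
    simp only [Finset.mem_filter, Finset.mem_product, not_and, not_ne_iff] at hr
    obtain ⟨⟨⟨hi0U, ha0U, hb0U⟩, ha0, hb0⟩, hne⟩ := hr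
    dsimp only
    by_cases hlt : a0 < b0
    · rw [if_pos hlt]
      dsimp only
      rw [if_pos rfl]
    · rw [if_neg hlt]
      dsimp only
      rw [if_neg (fun h : a0 = b0 => hne h)]
  · rintro ⟨⟨i, j⟩, a, b⟩ hq
    simp only [Finset.mem_filter, Finset.mem_product, not_and, not_ne_iff] at hq
    obtain ⟨⟨⟨⟨hiU, hjU⟩, haU, hbU⟩, hij, hai, hbj⟩, hcase⟩ := hq
    have hani : a ≠ i := ne_of_lt hai
    have hanj : a ≠ j := ne_of_lt (lt_trans hai hij)
    have hinj : i ≠ j := ne_of_lt hij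
    dsimp only
    by_cases hba : b = a
    · rw [if_pos hba]
      dsimp only
      rw [hba]
      exact congrArg PM (swap_X hani hanj hinj)
    · have hbi : b = i := hcase hba
      rw [if_neg hba]
      dsimp only
      rw [hbi]
      exact congrArg PM (swap_Y hani hanj hinj)

lemma sumQ2diag (U : Finset (Fin n)) :
    ∑ q ∈ ((U ×ˢ (U ×ˢ U)).filter (fun q => q.2.1 < q.1 ∧ q.2.2 < q.1)).filter
        (fun q => q.2.1 = q.2.2),
      PM (Equiv.swap q.2.1 q.1 * Equiv.swap q.2.2 q.1)
    = ((((U ×ˢ (U ×ˢ U)).filter (fun q => q.2.1 < q.1 ∧ q.2.2 < q.1)).filter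
        (fun q => q.2.1 = q.2.2)).card : ℝ) • 1 := by
  rw [Finset.sum_congr rfl (fun q hq => ?_), Finset.sum_const, ← Nat.cast_smul_eq_nsmul ℝ]
  have hdiag : q.2.1 = q.2.2 := (Finset.mem_filter.1 hq).2
  rw [← hdiag, Equiv.swap_mul_self, PM_one]

lemma zu_eq (U : Finset (Fin n)) :
    ZU U = (∑ p ∈ (U ×ˢ U).filter (fun p => p.1 < p.2), Jm U p.1 * Jm U p.2)
      - (∑ i ∈ U, Jm U i * Jm U i)
      + ((((U ×ˢ (U ×ˢ U)).filter (fun q => q.2.1 < q.1 ∧ q.2.2 < q.1)).filter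
          (fun q => q.2.1 = q.2.2)).card : ℝ) • 1 := by
  rw [sumJJ, sumJsq,
    ← Finset.sum_filter_add_sum_filter_not (((U ×ˢ U) ×ˢ (U ×ˢ U)).filter
        (fun q => q.1.1 < q.1.2 ∧ q.2.1 < q.1.1 ∧ q.2.2 < q.1.2))
      (fun q => q.2.2 ≠ q.2.1 ∧ q.2.2 ≠ q.1.1),
    ← Finset.sum_filter_add_sum_filter_not ((U ×ˢ (U ×ˢ U)).filter
        (fun q => q.2.1 < q.1 ∧ q.2.2 < q.1)) (fun q => q.2.1 = q.2.2),
    sumQd, sumQo, sumQ2diag]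
  abel

end Part7
section Part8
open Equiv Matrix Finset Module

variable {n : ℕ}

lemma zu_transpose (U : Finset (Fin n)) : (ZU U)ᵀ = ZU U := by
  unfold ZU
  rw [Matrix.transpose_sum]
  refine Finset.sum_congr rfl fun σ hσ => ?_
  rw [PM_transpose]
  congr 1
  have h2 : σ * σ = 1 := by
    have h := pow_orderOf_eq_one σ
    rwa [(mem_DD.1 hσ).1, pow_two] at h
  exact inv_eq_of_mul_eq_one_right h2

lemma zu_commute_jm (U : Finset (Fin n)) {i : Fin n} (hi : i ∈ U) :
    Commute (ZU U) (Jm U i) := by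
  rw [zu_eq]
  refine Commute.add_left (Commute.sub_left ?_ ?_) ?_
  · refine Commute.sum_left _ _ _ fun p hp => ?_
    have hp' := Finset.mem_product.1 (Finset.mem_filter.1 hp).1
    exact Commute.mul_left (jm_commute U hp'.1 hi) (jm_commute U hp'.2 hi)
  · refine Commute.sum_left _ _ _ fun j hj => ?_
    exact Commute.mul_left (jm_commute U hj hi) (jm_commute U hj hi)
  · exact (Commute.one_left (Jm U i)).smul_left _

lemma joint_eig {ι : Type*} [DecidableEq ι] (F : Finset ι) :
    ∀ (M : ι → Matrix (Equiv.Perm (Fin n)) (Equiv.Perm (Fin n)) ℝ),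
      (∀ i ∈ F, (M i)ᵀ = M i) →
      (∀ i ∈ F, ∀ j ∈ F, Commute (M i) (M j)) →
      ∀ (E : Submodule ℝ (EuclideanSpace ℝ (Equiv.Perm (Fin n)))), E ≠ ⊥ →
        (∀ i ∈ F, ∀ v ∈ E, Matrix.toEuclideanLin (M i) v ∈ E) →
        ∃ v, v ≠ 0 ∧ v ∈ E ∧ ∀ i ∈ F, ∃ a : ℝ, a ∈ spectrum ℝ (M i) ∧
          Matrix.toEuclideanLin (M i) v = a • v := by
  induction F using Finset.induction_on with
  | empty =>
    intro M _ _ E hE _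
    obtain ⟨v, hvmem, hvne⟩ := (Submodule.ne_bot_iff E).1 hE
    exact ⟨v, hvne, hvmem, fun i hi => absurd hi (Finset.notMem_empty i)⟩
  | @insert a F' ha IH =>
    intro M hsym hcomm E hE hinv
    obtain ⟨θ, hθspec, hEθ⟩ := exists_eigvec_in (M a)
      (TL_isSymmetric (hsym a (Finset.mem_insert_self a F'))) E hE
      (fun v hv => hinv a (Finset.mem_insert_self a F') v hv)
    obtain ⟨v, hvne, hvmem, hrest⟩ := IH M
      (fun i hi => hsym i (Finset.mem_insert_of_mem hi))
      (fun i hi j hj => hcomm i (Finset.mem_insert_of_mem hi) j (Finset.mem_insert_of_mem hj))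
      (E ⊓ Module.End.eigenspace (Matrix.toEuclideanLin (M a)) θ) hEθ
      (fun j hj v hv => by
        rcases Submodule.mem_inf.1 hv with ⟨hv1, hv2⟩
        exact Submodule.mem_inf.2
          ⟨hinv j (Finset.mem_insert_of_mem hj) v hv1,
           eig_invariant (hcomm j (Finset.mem_insert_of_mem hj) a
             (Finset.mem_insert_self a F')) hv2⟩)
    refine ⟨v, hvne, (Submodule.mem_inf.1 hvmem).1, fun i hi => ?_⟩
    rcases Finset.mem_insert.1 hi with rfl | hiF
    · exact ⟨θ, hθspec,
        Module.End.mem_eigenspace_iff.1 (Submodule.mem_inf.1 hvmem).2⟩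
    · exact hrest i hiF

lemma zu_spec (U : Finset (Fin n)) : ∀ μ ∈ spectrum ℝ (ZU U), ∃ m : ℤ, μ = (m : ℝ) := by
  intro μ hμ
  set E := Module.End.eigenspace (Matrix.toEuclideanLin (ZU U)) μ with hEdef
  have hE : E ≠ ⊥ := eigenspace_ne_bot_of_spec _ hμ
  have hinv : ∀ i ∈ U, ∀ v ∈ E, Matrix.toEuclideanLin (Jm U i) v ∈ E :=
    fun i hi v hv => eig_invariant (zu_commute_jm U hi).symm hv
  obtain ⟨v, hvne, hvE, hjoint⟩ := joint_eig U (fun i => Jm U i)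
    (fun i _ => jm_transpose U i) (fun i hi j hj => jm_commute U hi hj) E hE hinv
  choose! a haspec haeig using hjoint
  have hint : ∀ i ∈ U, ∃ m : ℤ, a i = (m : ℝ) :=
    fun i hi => jm_spec_aux (U.filter (· < i)).card U i hi rfl (a i) (haspec i hi)
  choose! m hm using hint
  have hZv : Matrix.toEuclideanLin (ZU U) v = μ • v := Module.End.mem_eigenspace_iff.1 hvE
  have hsum1 : Matrix.toEuclideanLin
      (∑ p ∈ (U ×ˢ U).filter (fun p => p.1 < p.2), Jm U p.1 * Jm U p.2) v
      = (∑ p ∈ (U ×ˢ U).filter (fun p => p.1 < p.2), a p.1 * a p.2) • v := by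
    rw [map_sum, LinearMap.sum_apply, Finset.sum_smul]
    refine Finset.sum_congr rfl fun p hp => ?_
    have hp' := Finset.mem_product.1 (Finset.mem_filter.1 hp).1
    rw [TL_mul, LinearMap.comp_apply, haeig p.2 hp'.2, _root_.map_smul,
      haeig p.1 hp'.1, smul_smul, mul_comm]
  have hsum2 : Matrix.toEuclideanLin (∑ i ∈ U, Jm U i * Jm U i) v
      = (∑ i ∈ U, a i * a i) • v := by
    rw [map_sum, LinearMap.sum_apply, Finset.sum_smul]
    refine Finset.sum_congr rfl fun i hi => ?_
    rw [TL_mul, LinearMap.comp_apply, haeig i hi, _root_.map_smul, haeig i hi, smul_smul]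
  set N : ℕ := (((U ×ˢ (U ×ˢ U)).filter (fun q => q.2.1 < q.1 ∧ q.2.2 < q.1)).filter
      (fun q => q.2.1 = q.2.2)).card with hNdef
  have hfinal : μ • v
      = ((∑ p ∈ (U ×ˢ U).filter (fun p => p.1 < p.2), a p.1 * a p.2)
          - (∑ i ∈ U, a i * a i) + (N : ℝ)) • v := by
    rw [← hZv]
    conv_lhs => rw [zu_eq U]
    rw [map_add, map_sub, _root_.map_smul, TL_one, LinearMap.add_apply, LinearMap.sub_apply,
      LinearMap.smul_apply, LinearMap.id_apply, hsum1, hsum2, add_smul, sub_smul, ← hNdef]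
  have hμeq : μ = (∑ p ∈ (U ×ˢ U).filter (fun p => p.1 < p.2), a p.1 * a p.2)
      - (∑ i ∈ U, a i * a i) + (N : ℝ) := smul_cancel hvne hfinal
  refine ⟨(∑ p ∈ (U ×ˢ U).filter (fun p => p.1 < p.2), m p.1 * m p.2)
      - (∑ i ∈ U, m i * m i) + (N : ℤ), ?_⟩
  have h1 : ∑ p ∈ (U ×ˢ U).filter (fun p => p.1 < p.2), a p.1 * a p.2
      = ∑ p ∈ (U ×ˢ U).filter (fun p => p.1 < p.2), ((m p.1 : ℝ) * (m p.2 : ℝ)) := by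
    refine Finset.sum_congr rfl fun p hp => ?_
    have hp' := Finset.mem_product.1 (Finset.mem_filter.1 hp).1
    rw [hm p.1 hp'.1, hm p.2 hp'.2]
  have h2 : ∑ i ∈ U, a i * a i = ∑ i ∈ U, ((m i : ℝ) * (m i : ℝ)) :=
    Finset.sum_congr rfl fun i hi => by rw [hm i hi]
  rw [hμeq, h1, h2]
  push_cast
  ring

end Part8
section Part9
open Equiv Matrix Finset Module

variable {n : ℕ}

lemma zu_central (τ : Equiv.Perm (Fin n)) : Commute (ZU (Finset.univ : Finset (Fin n))) (PM τ) := by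
  show ZU Finset.univ * PM τ = PM τ * ZU Finset.univ
  unfold ZU
  rw [Finset.sum_mul, Finset.mul_sum]
  rw [Finset.sum_congr rfl (fun σ _ => PM_mul σ τ),
    Finset.sum_congr rfl (fun σ _ => PM_mul τ σ)]
  refine Finset.sum_nbij' (i := fun σ => τ⁻¹ * σ * τ) (j := fun σ => τ * σ * τ⁻¹)
    ?_ ?_ ?_ ?_ ?_
  · intro σ hσ
    rw [mem_DD] at hσ ⊢
    obtain ⟨h2, h4, -⟩ := hσ
    refine ⟨?_, ?_, Finset.subset_univ _⟩
    · have h : τ⁻¹ * σ * τ = (MulAut.conj τ⁻¹) σ := by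
        simp [MulAut.conj_apply]
      rw [h]
      exact (orderOf_injective (MulAut.conj τ⁻¹).toMonoidHom (MulEquiv.injective _) σ).trans h2
    · have h : τ⁻¹ * σ * τ = τ⁻¹ * σ * (τ⁻¹)⁻¹ := by rw [inv_inv]
      rw [h, Equiv.Perm.support_conj, Finset.card_map]
      exact h4
  · intro σ hσ
    rw [mem_DD] at hσ ⊢
    obtain ⟨h2, h4, -⟩ := hσ
    refine ⟨?_, ?_, Finset.subset_univ _⟩
    · have h : τ * σ * τ⁻¹ = (MulAut.conj τ) σ := by simp [MulAut.conj_apply]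
      rw [h]
      exact (orderOf_injective (MulAut.conj τ).toMonoidHom (MulEquiv.injective _) σ).trans h2
    · rw [Equiv.Perm.support_conj, Finset.card_map]
      exact h4
  · intro σ _
    group
  · intro σ _
    group
  · intro σ _
    exact congrArg PM (by group)

lemma zu_commute_univ (V : Finset (Fin n)) :
    Commute (ZU (Finset.univ : Finset (Fin n))) (ZU V) :=
  Commute.sum_right _ _ _ fun σ _ => zu_central σ

lemma zu_commute_disjoint {A B : Finset (Fin n)} (hAB : Disjoint A B) :
    Commute (ZU A) (ZU B) := by
  refine Commute.sum_left _ _ _ fun σ hσ => ?_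
  refine Commute.sum_right _ _ _ fun ρ hρ => ?_
  have hσA := (mem_DD.1 hσ).2.2
  have hρB := (mem_DD.1 hρ).2.2
  have hd : Equiv.Perm.Disjoint σ ρ :=
    Equiv.Perm.disjoint_iff_disjoint_support.2 (hAB.mono hσA hρB)
  show PM σ * PM ρ = PM ρ * PM σ
  rw [PM_mul, PM_mul, hd.commute.eq]

end Part9
theorem stmt_13 {n k : ℕ} (hk : 1 ≤ k) (hkn : k < n)
    (Γ : SimpleGraph (Equiv.Perm (Fin n))) [DecidableRel Γ.Adj]
    (hΓ : ∀ u v : Equiv.Perm (Fin n), Γ.Adj u v ↔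
      orderOf (v * u⁻¹) = 2 ∧ (v * u⁻¹).support.card = 4 ∧
        (∃ a ∈ (v * u⁻¹).support, (a : ℕ) < k) ∧
        (∃ b ∈ (v * u⁻¹).support, k ≤ (b : ℕ))) :
    ∀ μ ∈ spectrum ℝ (Γ.adjMatrix ℝ), ∃ m : ℤ, μ = m := by
  classical
  intro μ hμ
  set Af : Finset (Fin n) := Finset.univ.filter (fun x => (x : ℕ) < k) with hAfdef
  set Bf : Finset (Fin n) := Finset.univ.filter (fun x => ¬ (x : ℕ) < k) with hBfdef
  have hABdisj : Disjoint Af Bf := by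
    rw [Finset.disjoint_left]
    intro x hx hx'
    rw [hAfdef, Finset.mem_filter] at hx
    rw [hBfdef, Finset.mem_filter] at hx'
    exact hx'.2 hx.2
  set SS : Finset (Equiv.Perm (Fin n)) :=
    (DD (Finset.univ : Finset (Fin n))).filter
      (fun σ => ¬ σ.support ⊆ Af ∧ ¬ σ.support ⊆ Bf) with hSSdef
  have hmemSS : ∀ σ : Equiv.Perm (Fin n), σ ∈ SS ↔
      (orderOf σ = 2 ∧ σ.support.card = 4 ∧
        (∃ a ∈ σ.support, (a : ℕ) < k) ∧ (∃ b ∈ σ.support, k ≤ (b : ℕ))) := by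
    intro σ
    rw [hSSdef, Finset.mem_filter, mem_DD]
    constructor
    · rintro ⟨⟨h2, h4, -⟩, hnA, hnB⟩
      refine ⟨h2, h4, ?_, ?_⟩
      · obtain ⟨x, hxsupp, hxB⟩ := Finset.not_subset.1 hnB
        refine ⟨x, hxsupp, ?_⟩
        by_contra hcon
        exact hxB (by rw [hBfdef]; simpa using not_lt.1 hcon)
      · obtain ⟨y, hysupp, hyA⟩ := Finset.not_subset.1 hnA
        refine ⟨y, hysupp, ?_⟩
        by_contra hcon
        exact hyA (by rw [hAfdef]; simpa using not_le.1 hcon)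
    · rintro ⟨h2, h4, ⟨x, hx, hxk⟩, ⟨y, hy, hyk⟩⟩
      refine ⟨⟨h2, h4, Finset.subset_univ _⟩, ?_, ?_⟩
      · refine Finset.not_subset.2 ⟨y, hy, ?_⟩
        rw [hAfdef]
        simpa using not_lt.2 hyk
      · refine Finset.not_subset.2 ⟨x, hx, ?_⟩
        rw [hBfdef]
        simpa using hxk
  have hadjSS : Γ.adjMatrix ℝ = ∑ σ ∈ SS, PM σ := by
    ext v u
    rw [SimpleGraph.adjMatrix_apply]
    have hiff : ∀ σ : Equiv.Perm (Fin n), (v = σ * u) ↔ (σ = v * u⁻¹) := by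
      intro σ
      constructor
      · rintro rfl
        rw [mul_assoc, mul_inv_cancel, mul_one]
      · rintro rfl
        rw [mul_assoc, inv_mul_cancel, mul_one]
    have hPM : ∀ σ : Equiv.Perm (Fin n), PM σ v u = if σ = v * u⁻¹ then 1 else 0 := by
      intro σ
      show (if v = σ * u then 1 else 0 : ℝ) = _
      exact if_congr (hiff σ) rfl rfl
    have hsum : (∑ σ ∈ SS, PM σ) v u = if v * u⁻¹ ∈ SS then 1 else 0 := by
      rw [Matrix.sum_apply]
      rw [Finset.sum_congr rfl (fun σ _ => hPM σ)]
      exact Finset.sum_ite_eq' SS (v * u⁻¹) (fun _ => (1 : ℝ))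
    rw [hsum]
    refine if_congr ?_ rfl rfl
    rw [hmemSS, Γ.adj_comm]
    exact hΓ u v
  have hsplit : Γ.adjMatrix ℝ = ZU Finset.univ - ZU Af - ZU Bf := by
    rw [hadjSS]
    have hDA : (DD (Finset.univ : Finset (Fin n))).filter (fun σ => σ.support ⊆ Af)
        = DD Af := by
      ext σ
      rw [Finset.mem_filter, mem_DD, mem_DD]
      constructor
      · rintro ⟨⟨h2, h4, -⟩, hc⟩
        exact ⟨h2, h4, hc⟩
      · rintro ⟨h2, h4, hc⟩
        exact ⟨⟨h2, h4, Finset.subset_univ _⟩, hc⟩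
    have hDB : (((DD (Finset.univ : Finset (Fin n))).filter
          (fun σ => ¬ σ.support ⊆ Af)).filter (fun σ => σ.support ⊆ Bf)) = DD Bf := by
      ext σ
      rw [Finset.mem_filter, Finset.mem_filter, mem_DD, mem_DD]
      constructor
      · rintro ⟨⟨⟨h2, h4, -⟩, -⟩, hc⟩
        exact ⟨h2, h4, hc⟩
      · rintro ⟨h2, h4, hc⟩
        refine ⟨⟨⟨h2, h4, Finset.subset_univ _⟩, ?_⟩, hc⟩
        intro hsub
        have hne : σ.support.Nonempty := Finset.card_pos.1 (by rw [h4]; norm_num)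
        obtain ⟨x, hx⟩ := hne
        exact (Finset.disjoint_left.1 hABdisj (hsub hx)) (hc hx)
    have hSS2 : (((DD (Finset.univ : Finset (Fin n))).filter
          (fun σ => ¬ σ.support ⊆ Af)).filter (fun σ => ¬ σ.support ⊆ Bf)) = SS := by
      rw [hSSdef, Finset.filter_filter]
    have h1 : ZU (Finset.univ : Finset (Fin n))
        = ZU Af + (ZU Bf + ∑ σ ∈ SS, PM σ) := by
      conv_lhs => rw [ZU, ← Finset.sum_filter_add_sum_filter_not (DD Finset.univ)
        (fun σ => σ.support ⊆ Af) PM]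
      rw [hDA]
      conv_lhs => rw [← Finset.sum_filter_add_sum_filter_not
        ((DD (Finset.univ : Finset (Fin n))).filter (fun σ => ¬ σ.support ⊆ Af))
        (fun σ => σ.support ⊆ Bf) PM]
      rw [hDB, hSS2]
      rfl
    rw [h1]
    abel
  -- spectral cascade
  have hsymA : (ZU (Finset.univ : Finset (Fin n)))ᵀ = ZU Finset.univ := zu_transpose _
  have hC1 : Commute (ZU (Finset.univ : Finset (Fin n))) (ZU Af) := zu_commute_univ Af
  have hC2 : Commute (ZU (Finset.univ : Finset (Fin n))) (ZU Bf) := zu_commute_univ Bf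
  have hC3 : Commute (ZU Af) (ZU Bf) := zu_commute_disjoint hABdisj
  have hAc1 : Commute (ZU (Finset.univ : Finset (Fin n))) (Γ.adjMatrix ℝ) := by
    rw [hsplit]
    exact ((Commute.refl _).sub_right hC1).sub_right hC2
  have hAc2 : Commute (ZU Af) (Γ.adjMatrix ℝ) := by
    rw [hsplit]
    exact ((hC1.symm.sub_right (Commute.refl _))).sub_right hC3
  have hAc3 : Commute (ZU Bf) (Γ.adjMatrix ℝ) := by
    rw [hsplit]
    exact ((hC2.symm.sub_right hC3.symm)).sub_right (Commute.refl _)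
  set E0 := Module.End.eigenspace (Matrix.toEuclideanLin (Γ.adjMatrix ℝ)) μ with hE0def
  have hE0 : E0 ≠ ⊥ := eigenspace_ne_bot_of_spec _ hμ
  obtain ⟨θ0, hθ0spec, hE1⟩ := exists_eigvec_in (ZU Finset.univ)
    (TL_isSymmetric (zu_transpose _)) E0 hE0
    (fun v hv => eig_invariant hAc1 hv)
  set E1 := E0 ⊓ Module.End.eigenspace (Matrix.toEuclideanLin (ZU Finset.univ)) θ0 with hE1def
  obtain ⟨θ1, hθ1spec, hE2⟩ := exists_eigvec_in (ZU Af)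
    (TL_isSymmetric (zu_transpose _)) E1 hE1
    (fun v hv => by
      rcases Submodule.mem_inf.1 hv with ⟨hv1, hv2⟩
      exact Submodule.mem_inf.2 ⟨eig_invariant hAc2 hv1, eig_invariant hC1.symm hv2⟩)
  set E2 := E1 ⊓ Module.End.eigenspace (Matrix.toEuclideanLin (ZU Af)) θ1 with hE2def
  obtain ⟨θ2, hθ2spec, hE3⟩ := exists_eigvec_in (ZU Bf)
    (TL_isSymmetric (zu_transpose _)) E2 hE2
    (fun v hv => by
      rcases Submodule.mem_inf.1 hv with ⟨hv1, hv2⟩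
      rcases Submodule.mem_inf.1 hv1 with ⟨hv0, hvu⟩
      exact Submodule.mem_inf.2
        ⟨Submodule.mem_inf.2 ⟨eig_invariant hAc3 hv0, eig_invariant hC2.symm hvu⟩,
         eig_invariant hC3.symm hv2⟩)
  obtain ⟨v, hvmem, hvne⟩ := (Submodule.ne_bot_iff _).1 hE3
  rcases Submodule.mem_inf.1 hvmem with ⟨hv2, hvB⟩
  rcases Submodule.mem_inf.1 hv2 with ⟨hv1, hvA⟩
  rcases Submodule.mem_inf.1 hv1 with ⟨hv0, hvU⟩
  have hvadj : Matrix.toEuclideanLin (Γ.adjMatrix ℝ) v = μ • v :=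
    Module.End.mem_eigenspace_iff.1 hv0
  have hvu : Matrix.toEuclideanLin (ZU Finset.univ) v = θ0 • v :=
    Module.End.mem_eigenspace_iff.1 hvU
  have hva : Matrix.toEuclideanLin (ZU Af) v = θ1 • v :=
    Module.End.mem_eigenspace_iff.1 hvA
  have hvb : Matrix.toEuclideanLin (ZU Bf) v = θ2 • v :=
    Module.End.mem_eigenspace_iff.1 hvB
  have hcombine : μ • v = (θ0 - θ1 - θ2) • v := by
    rw [← hvadj]
    conv_lhs => rw [hsplit]
    rw [map_sub, map_sub, LinearMap.sub_apply, LinearMap.sub_apply, hvu, hva, hvb,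
      sub_smul, sub_smul]
  have hμeq : μ = θ0 - θ1 - θ2 := smul_cancel hvne hcombine
  obtain ⟨m0, hm0⟩ := zu_spec Finset.univ θ0 hθ0spec
  obtain ⟨m1, hm1⟩ := zu_spec Af θ1 hθ1spec
  obtain ⟨m2, hm2⟩ := zu_spec Bf θ2 hθ2spec
  refine ⟨m0 - m1 - m2, ?_⟩
  rw [hμeq, hm0, hm1, hm2]
  push_cast
  ring
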